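/- Let X = (X_1,...,X_n) be i.u.d. and let 𝒴 be a random variable with values in the state space Σ = Δ_n × S_n, where Δ_n = {(a_1,...,a_n) : 1 ≥ a_1 ≥ ... ≥ a_n ≥ 0}. Then Y := proj_Y(𝒴), where proj_Y(a,s) = a^s, is (in distribution) a rearrangement of the descending arrangement X↓ if and only if for every Lebesgue-measurable set A ⊂ Δ_n, P(𝒴 ∈ A × S_n) = n! · Leb_n(A). -/

import Mathlib

open MeasureTheory

/-- A law `ν` on `ℝ^n` is a *rearrangement* of a law `lam` on `ℝ^n`. -/
def IsRearrangement (n : ℕ) (lam nu : Measure (Fin n → ℝ)) : Prop :=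
  ∃ (Ω : Type) (_ : MeasurableSpace Ω) (P : Measure Ω),
    IsProbabilityMeasure P ∧
    ∃ (X : Ω → Fin n → ℝ) (σ : Ω → Equiv.Perm (Fin n)),
      Measurable X ∧ (∀ s : Equiv.Perm (Fin n), MeasurableSet {ω | σ ω = s}) ∧
      P.map X = lam ∧ P.map (fun ω i => X ω (σ ω i)) = nu

/-- The ascending arrangement of a tuple. -/
noncomputable def ascArr (n : ℕ) (a : Fin n → ℝ) : Fin n → ℝ := a ∘ Tuple.sort a

/-- The descending arrangement of a tuple: its entries listed in decreasing order. -/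
noncomputable def descArr (n : ℕ) (a : Fin n → ℝ) : Fin n → ℝ := fun i => ascArr n a i.rev

/-- `X = (X_1,...,X_n)` is i.u.d.: the coordinates are independent and each is uniformly
distributed on `[0,1]`. -/
def IsIUD {Ω : Type} [MeasurableSpace Ω] (P : Measure Ω) {n : ℕ}
    (X : Ω → Fin n → ℝ) : Prop :=
  (∀ i, Measurable fun ω => X ω i) ∧
  ProbabilityTheory.iIndepFun (fun i ω => X ω i) P ∧
  ∀ i, P.map (fun ω => X ω i) = volume.restrict (Set.Icc (0:ℝ) 1)

/-- `Δ_n`, the simplex of descending `n`-tuples in `[0,1]^n`. -/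
def simplexSet (n : ℕ) : Set (Fin n → ℝ) :=
  {a | (∀ i, a i ∈ Set.Icc (0:ℝ) 1) ∧ ∀ i j : Fin n, i ≤ j → a j ≤ a i}

namespace RA
variable {n : ℕ}

lemma ascArr_comp_perm (a : Fin n → ℝ) (s : Equiv.Perm (Fin n)) :
    ascArr n (a ∘ s) = ascArr n a :=
  Tuple.comp_perm_comp_sort_eq_comp_sort

lemma descArr_comp_perm (a : Fin n → ℝ) (s : Equiv.Perm (Fin n)) :
    descArr n (a ∘ s) = descArr n a := by
  funext i; unfold descArr; rw [ascArr_comp_perm]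

lemma monotone_ascArr (a : Fin n → ℝ) : Monotone (ascArr n a) := Tuple.monotone_sort a

lemma antitone_descArr (a : Fin n → ℝ) : Antitone (descArr n a) := by
  intro i j hij
  exact monotone_ascArr a (Fin.rev_le_rev.mpr hij)

lemma ascArr_of_monotone {a : Fin n → ℝ} (h : Monotone a) : ascArr n a = a := by
  have h2 : a ∘ ⇑(Equiv.refl (Fin n)) = a ∘ ⇑(Tuple.sort a) :=
    (Tuple.comp_sort_eq_comp_iff_monotone).mpr (by simpa using h)
  unfold ascArr
  rw [← h2]; rfl

lemma descArr_of_antitone {a : Fin n → ℝ} (h : Antitone a) : descArr n a = a := by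
  have hm : Monotone (a ∘ ⇑(Fin.revPerm : Equiv.Perm (Fin n))) := by
    intro i j hij
    exact h (Fin.rev_le_rev.mpr hij)
  funext i
  show ascArr n a i.rev = a i
  rw [← ascArr_comp_perm a Fin.revPerm, ascArr_of_monotone hm]
  show a (Fin.rev i.rev) = a i
  rw [Fin.rev_rev]

lemma descArr_eq_comp (a : Fin n → ℝ) :
    descArr n a = a ∘ ⇑((Fin.revPerm : Equiv.Perm (Fin n)).trans (Tuple.sort a)) := rfl

lemma descArr_mem_simplex {a : Fin n → ℝ} (h : ∀ i, a i ∈ Set.Icc (0:ℝ) 1) :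
    descArr n a ∈ simplexSet n :=
  ⟨fun i => by rw [descArr_eq_comp]; exact h _, fun i j hij => antitone_descArr a hij⟩

lemma descArr_of_mem_simplex {a : Fin n → ℝ} (h : a ∈ simplexSet n) : descArr n a = a :=
  descArr_of_antitone (fun i j hij => h.2 i j hij)

lemma pcne (i : Fin n) :
    (Finset.powersetCard ((i : ℕ) + 1) (Finset.univ : Finset (Fin n))).Nonempty :=
  Finset.powersetCard_nonempty.mpr (by simp only [Finset.card_univ, Fintype.card_fin]; omega)

lemma mem_pc_nonempty {i : Fin n} {S : Finset (Fin n)}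
    (hS : S ∈ Finset.powersetCard ((i : ℕ) + 1) (Finset.univ : Finset (Fin n))) :
    S.Nonempty :=
  Finset.card_pos.mp (by rw [(Finset.mem_powersetCard.mp hS).2]; omega)

lemma descArr_eq_sup' (a : Fin n → ℝ) (i : Fin n) :
    descArr n a i =
      (Finset.powersetCard ((i : ℕ) + 1) (Finset.univ : Finset (Fin n))).attach.sup'
        (Finset.attach_nonempty_iff.mpr (pcne i))
        (fun S => S.1.inf' (mem_pc_nonempty S.2) a) := by
  set t : Equiv.Perm (Fin n) := (Fin.revPerm : Equiv.Perm (Fin n)).trans (Tuple.sort a) with ht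
  have hb : ∀ k, descArr n a k = a (t k) := fun k => rfl
  have hb' : ∀ j, a j = descArr n a (t.symm j) := by
    intro j; rw [hb, Equiv.apply_symm_apply]
  have hAnti := antitone_descArr a
  apply le_antisymm
  · set S₀ : Finset (Fin n) := (Finset.Iic i).image t with hS₀
    have hmem : S₀ ∈ Finset.powersetCard ((i : ℕ) + 1) (Finset.univ : Finset (Fin n)) := by
      rw [Finset.mem_powersetCard]
      refine ⟨Finset.subset_univ _, ?_⟩
      rw [hS₀, Finset.card_image_of_injective _ t.injective, Fin.card_Iic]
    have h1 : descArr n a i ≤ S₀.inf' (mem_pc_nonempty hmem) a := by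
      apply Finset.le_inf'
      intro j hj
      rw [hS₀, Finset.mem_image] at hj
      obtain ⟨k, hk, rfl⟩ := hj
      rw [← hb]
      exact hAnti (Finset.mem_Iic.mp hk)
    exact h1.trans (Finset.le_sup' (fun S => S.1.inf' (mem_pc_nonempty S.2) a)
      (Finset.mem_attach _ ⟨S₀, hmem⟩))
  · apply Finset.sup'_le
    rintro ⟨S, hS⟩ -
    have hcard := (Finset.mem_powersetCard.mp hS).2
    have hex : ∃ j ∈ S, i ≤ t.symm j := by
      by_contra hcon
      push_neg at hcon
      have hsub : S.image t.symm ⊆ Finset.Iio i := by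
        intro j hj
        rw [Finset.mem_image] at hj
        obtain ⟨k, hk, rfl⟩ := hj
        exact Finset.mem_Iio.mpr (hcon k hk)
      have := (Finset.card_le_card hsub)
      rw [Finset.card_image_of_injective _ t.symm.injective, hcard, Fin.card_Iio] at this
      omega
    obtain ⟨j, hjS, hij⟩ := hex
    calc S.inf' (mem_pc_nonempty hS) a ≤ a j := Finset.inf'_le _ hjS
      _ = descArr n a (t.symm j) := hb' j
      _ ≤ descArr n a i := hAnti hij

lemma measurable_descArr : Measurable (descArr n) := by
  apply measurable_pi_lambda
  intro i
  have : (fun a => descArr n a i) =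
      (Finset.powersetCard ((i : ℕ) + 1) (Finset.univ : Finset (Fin n))).attach.sup'
        (Finset.attach_nonempty_iff.mpr (pcne i))
        (fun S => S.1.inf' (mem_pc_nonempty S.2) (fun j => (fun a : Fin n → ℝ => a j))) := by
    funext a
    rw [descArr_eq_sup' a i, Finset.sup'_apply]
    congr 1
    funext S
    rw [Finset.inf'_apply]
  rw [this]
  apply Finset.measurable_sup'
  rintro ⟨S, hS⟩ -
  exact Finset.inf'_induction _ _ (fun _ h1 _ h2 => Measurable.inf h1 h2)
    (fun j _ => measurable_pi_apply j)

def cube (n : ℕ) : Set (Fin n → ℝ) := Set.pi Set.univ fun _ => Set.Icc (0:ℝ) 1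

lemma measurableSet_cube : MeasurableSet (cube n) :=
  MeasurableSet.univ_pi fun _ => measurableSet_Icc

lemma measurableSet_simplexSet : MeasurableSet (simplexSet n) := by
  have h1 : MeasurableSet {a : Fin n → ℝ | ∀ i, a i ∈ Set.Icc (0:ℝ) 1} := by
    rw [Set.setOf_forall]
    exact MeasurableSet.iInter fun i => (measurable_pi_apply i) measurableSet_Icc
  have h2 : MeasurableSet {a : Fin n → ℝ | ∀ i j : Fin n, i ≤ j → a j ≤ a i} := by
    rw [Set.setOf_forall]
    refine MeasurableSet.iInter fun i => ?_
    rw [Set.setOf_forall]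
    refine MeasurableSet.iInter fun j => ?_
    rw [Set.setOf_forall]
    exact MeasurableSet.iInter fun _ =>
      measurableSet_le (measurable_pi_apply j) (measurable_pi_apply i)
  exact h1.inter h2

lemma simplex_subset_cube : simplexSet n ⊆ cube n := fun a ha i _ => ha.1 i

lemma map_X_eq {Ω₁ : Type} [MeasurableSpace Ω₁] (P₁ : Measure Ω₁)
    {X : Ω₁ → Fin n → ℝ} (hX : IsIUD P₁ X) :
    P₁.map X = volume.restrict (cube n) := by
  have hXm : Measurable X := measurable_pi_lambda _ hX.1
  have h1 : Measure.pi (fun _ : Fin n => volume.restrict (Set.Icc (0:ℝ) 1)) = P₁.map X := by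
    apply Measure.pi_eq
    intro s hs
    rw [Measure.map_apply hXm (MeasurableSet.univ_pi hs)]
    have hpre : X ⁻¹' (Set.pi Set.univ s) = ⋂ i, (fun ω => X ω i) ⁻¹' s i := by
      ext ω; simp [Set.mem_pi]
    rw [hpre]
    have hind := (ProbabilityTheory.iIndepFun_iff_measure_inter_preimage_eq_mul.mp hX.2.1)
      Finset.univ (sets := s) (fun i _ => hs i)
    simp only [Finset.mem_univ, Set.iInter_true, Set.iInter_iInter_eq_left] at hind
    rw [hind]
    congr 1
    funext i
    rw [← Measure.map_apply (hX.1 i) (hs i), hX.2.2 i]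
  have h2 : Measure.pi (fun _ : Fin n => volume.restrict (Set.Icc (0:ℝ) 1)) =
      volume.restrict (cube n) := by
    apply Measure.pi_eq
    intro s hs
    rw [Measure.restrict_apply (MeasurableSet.univ_pi hs)]
    have : Set.pi Set.univ s ∩ cube n = Set.pi Set.univ (fun i => s i ∩ Set.Icc (0:ℝ) 1) := by
      ext a
      simp only [cube, Set.mem_inter_iff, Set.mem_pi, Set.mem_univ, true_implies,
        Set.mem_Icc, forall_and]
    rw [this, volume_pi_pi]
    congr 1
    funext i
    rw [Measure.restrict_apply (hs i)]
  rw [← h1, h2]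

lemma vol_comp_perm (s : Equiv.Perm (Fin n)) {A : Set (Fin n → ℝ)} (hA : MeasurableSet A) :
    volume ((fun a : Fin n → ℝ => a ∘ ⇑s) ⁻¹' A) = volume A := by
  have hmp := volume_measurePreserving_piCongrLeft (fun _ : Fin n => ℝ) s.symm
  have heq : (fun a : Fin n → ℝ => a ∘ ⇑s) =
      ⇑(MeasurableEquiv.piCongrLeft (fun _ : Fin n => ℝ) s.symm) := by
    funext a
    funext j
    rw [MeasurableEquiv.coe_piCongrLeft]
    have := Equiv.piCongrLeft_apply_apply (P := fun _ : Fin n => ℝ) s.symm a (s j)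
    simpa using this.symm
  rw [heq]
  exact hmp.measure_preimage hA.nullMeasurableSet

lemma vol_pair_eq_zero {p q : Fin n} (hpq : p ≠ q) :
    volume {a : Fin n → ℝ | a p = a q} = 0 := by
  have hker : {a : Fin n → ℝ | a p = a q} =
      (LinearMap.ker ((LinearMap.proj p : (Fin n → ℝ) →ₗ[ℝ] ℝ) - LinearMap.proj q) : Set _) := by
    ext a
    simp [LinearMap.mem_ker, sub_eq_zero]
  rw [hker]
  apply Measure.addHaar_submodule
  intro htop
  have hmem : (Pi.single p (1:ℝ)) ∈
      LinearMap.ker ((LinearMap.proj p : (Fin n → ℝ) →ₗ[ℝ] ℝ) - LinearMap.proj q) := by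
    rw [htop]; trivial
  rw [LinearMap.mem_ker] at hmem
  simp only [LinearMap.sub_apply, LinearMap.proj_apply, Pi.single_eq_same,
    Pi.single_eq_of_ne (Ne.symm hpq), sub_zero] at hmem
  exact one_ne_zero hmem

lemma vol_nonInj_eq_zero :
    volume {a : Fin n → ℝ | ¬ Function.Injective a} = 0 := by
  have hsub : {a : Fin n → ℝ | ¬ Function.Injective a} ⊆
      ⋃ (p : Fin n), ⋃ (q : Fin n), ⋃ (_ : p ≠ q), {a : Fin n → ℝ | a p = a q} := by
    intro a ha
    rw [Set.mem_setOf_eq, Function.not_injective_iff] at ha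
    obtain ⟨p, q, hpq, hne⟩ := ha
    simp only [Set.mem_iUnion]
    exact ⟨p, q, hne, hpq⟩
  refine measure_mono_null hsub ?_
  exact measure_iUnion_null fun p => measure_iUnion_null fun q => measure_iUnion_null fun h =>
    vol_pair_eq_zero h

lemma descArr_preimage (A : Set (Fin n → ℝ)) (hA : A ⊆ simplexSet n) :
    descArr n ⁻¹' A = ⋃ s : Equiv.Perm (Fin n), (fun a : Fin n → ℝ => a ∘ ⇑s) ⁻¹' A := by
  ext a
  simp only [Set.mem_preimage, Set.mem_iUnion]
  constructor
  · intro h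
    exact ⟨(Fin.revPerm : Equiv.Perm (Fin n)).trans (Tuple.sort a),
      by rw [← descArr_eq_comp]; exact h⟩
  · rintro ⟨s, hs⟩
    have h1 : descArr n (a ∘ ⇑s) = a ∘ ⇑s := descArr_of_mem_simplex (hA hs)
    rw [← descArr_comp_perm a s, h1]; exact hs

lemma map_descArr {Ω₁ : Type} [MeasurableSpace Ω₁] (P₁ : Measure Ω₁)
    {X : Ω₁ → Fin n → ℝ} (hX : IsIUD P₁ X) (E : Set (Fin n → ℝ)) (hE : MeasurableSet E) :
    (P₁.map fun ω => descArr n (X ω)) E =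
      (n.factorial : ENNReal) * volume (E ∩ simplexSet n) := by
  have hXm : Measurable X := measurable_pi_lambda _ hX.1
  have hd : Measurable (descArr n) := measurable_descArr
  have hmap : (P₁.map fun ω => descArr n (X ω)) = (P₁.map X).map (descArr n) := by
    rw [Measure.map_map hd hXm]; rfl
  rw [hmap, map_X_eq P₁ hX, Measure.map_apply hd hE, Measure.restrict_apply (hd hE)]
  set A := E ∩ simplexSet n with hA
  have hAsub : A ⊆ simplexSet n := Set.inter_subset_right
  have hAm : MeasurableSet A := hE.inter measurableSet_simplexSet
  have hstep : descArr n ⁻¹' E ∩ cube n = descArr n ⁻¹' A ∩ cube n := by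
    ext a
    simp only [Set.mem_inter_iff, Set.mem_preimage, hA]
    constructor
    · rintro ⟨h1, h2⟩
      exact ⟨⟨h1, descArr_mem_simplex (fun i => h2 i (Set.mem_univ i))⟩, h2⟩
    · rintro ⟨h1, h2⟩; exact ⟨h1.1, h2⟩
  rw [hstep, ← Measure.restrict_apply (hd hAm), descArr_preimage A hAsub]
  have hBms : ∀ s : Equiv.Perm (Fin n), MeasurableSet ((fun a : Fin n → ℝ => a ∘ ⇑s) ⁻¹' A) :=
    fun s => (measurable_pi_lambda _ fun i => measurable_pi_apply (s i)) hAm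
  have hdisj : Pairwise (Function.onFun (AEDisjoint (volume.restrict (cube n)))
      fun s : Equiv.Perm (Fin n) => (fun a : Fin n → ℝ => a ∘ ⇑s) ⁻¹' A) := by
    intro s t hst
    have hsub : ((fun a : Fin n → ℝ => a ∘ ⇑s) ⁻¹' A) ∩
        ((fun a : Fin n → ℝ => a ∘ ⇑t) ⁻¹' A) ⊆
        {a : Fin n → ℝ | ¬ Function.Injective a} := by
      rintro a ⟨h1, h2⟩ hinj
      apply hst
      have e1 : (a ∘ ⇑s : Fin n → ℝ) = descArr n a := by
        rw [← descArr_comp_perm a s, descArr_of_mem_simplex (hAsub h1)]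
      have e2 : (a ∘ ⇑t : Fin n → ℝ) = descArr n a := by
        rw [← descArr_comp_perm a t, descArr_of_mem_simplex (hAsub h2)]
      have e3 : (a ∘ ⇑s : Fin n → ℝ) = a ∘ ⇑t := e1.trans e2.symm
      apply Equiv.ext
      intro i
      exact hinj (congrFun e3 i)
    refine measure_mono_null hsub ?_
    exact le_antisymm ((Measure.restrict_apply_le _ _).trans vol_nonInj_eq_zero.le) zero_le
  rw [measure_iUnion₀ hdisj (fun s => (hBms s).nullMeasurableSet)]
  have hterm : ∀ s : Equiv.Perm (Fin n),
      (volume.restrict (cube n)) ((fun a : Fin n → ℝ => a ∘ ⇑s) ⁻¹' A) = volume A := by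
    intro s
    rw [Measure.restrict_apply (hBms s)]
    have hsub2 : (fun a : Fin n → ℝ => a ∘ ⇑s) ⁻¹' A ⊆ cube n := by
      intro a ha i _
      have h1 := (simplex_subset_cube (hAsub ha)) (s.symm i) (Set.mem_univ _)
      simpa using h1
    rw [Set.inter_eq_self_of_subset_left hsub2, vol_comp_perm s hAm]
  rw [tsum_congr hterm, tsum_fintype, Finset.sum_const, Finset.card_univ,
    Fintype.card_perm, Fintype.card_fin, nsmul_eq_mul]

lemma measurable_permApp {Ω : Type} [MeasurableSpace Ω] {g : Ω → Fin n → ℝ}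
    {σ : Ω → Equiv.Perm (Fin n)} (hg : Measurable g)
    (hσ : ∀ s, MeasurableSet {ω | σ ω = s}) :
    Measurable (fun ω i => g ω (σ ω i)) := by
  apply measurable_pi_lambda
  intro i
  have heq : (fun ω => g ω (σ ω i)) =
      fun ω => ∑ s : Equiv.Perm (Fin n), if σ ω = s then g ω (s i) else 0 := by
    funext ω
    rw [Finset.sum_ite_eq Finset.univ (σ ω) (fun s => g ω (s i))]
    simp
  rw [heq]
  exact Finset.measurable_sum _ fun s _ =>
    Measurable.ite (hσ s) ((measurable_pi_apply (s i)).comp hg) measurable_const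

end RA

theorem state_space_rearrangement {n : ℕ}
    {Ω₁ : Type} [MeasurableSpace Ω₁] (P₁ : Measure Ω₁) [IsProbabilityMeasure P₁]
    (X : Ω₁ → Fin n → ℝ) (hX : IsIUD P₁ X)
    {Ω₂ : Type} [MeasurableSpace Ω₂] (P₂ : Measure Ω₂) [IsProbabilityMeasure P₂]
    (𝒴 : Ω₂ → (Fin n → ℝ) × Equiv.Perm (Fin n))
    (h𝒴₁ : Measurable fun ω => (𝒴 ω).1)
    (h𝒴₂ : ∀ s : Equiv.Perm (Fin n), MeasurableSet {ω | (𝒴 ω).2 = s})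
    (hval : ∀ᵐ ω ∂P₂, (𝒴 ω).1 ∈ simplexSet n) :
    IsRearrangement n (P₁.map (fun ω => descArr n (X ω)))
        (P₂.map (fun ω i => (𝒴 ω).1 ((𝒴 ω).2 i)))
      ↔ ∀ A : Set (Fin n → ℝ), A ⊆ simplexSet n → MeasurableSet A →
          P₂ {ω | (𝒴 ω).1 ∈ A} = (n.factorial : ENNReal) * volume A := by
  constructor
  · rintro ⟨Ω, mΩ, P, hP, X', σ', hX'm, hσ'm, hmap1, hmap2⟩
    intro A hAΔ hAm
    have hYm : Measurable (fun ω i => (𝒴 ω).1 ((𝒴 ω).2 i)) :=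
      RA.measurable_permApp h𝒴₁ h𝒴₂
    have hd : Measurable (descArr n) := RA.measurable_descArr
    have hpre : MeasurableSet (descArr n ⁻¹' A) := hd hAm
    have hae : ({ω | (𝒴 ω).1 ∈ A} : Set Ω₂) =ᵐ[P₂]
        ((fun ω i => (𝒴 ω).1 ((𝒴 ω).2 i)) ⁻¹' (descArr n ⁻¹' A)) := by
      filter_upwards [hval] with ω hω
      have hde : descArr n (fun i => (𝒴 ω).1 ((𝒴 ω).2 i)) = (𝒴 ω).1 := by
        have h1 : (fun i => (𝒴 ω).1 ((𝒴 ω).2 i)) = (𝒴 ω).1 ∘ ⇑(𝒴 ω).2 := rfl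
        rw [h1, RA.descArr_comp_perm, RA.descArr_of_mem_simplex hω]
      show ((𝒴 ω).1 ∈ A) = (descArr n (fun i => (𝒴 ω).1 ((𝒴 ω).2 i)) ∈ A)
      rw [hde]
    calc P₂ {ω | (𝒴 ω).1 ∈ A}
        = P₂ ((fun ω i => (𝒴 ω).1 ((𝒴 ω).2 i)) ⁻¹' (descArr n ⁻¹' A)) := measure_congr hae
      _ = (P₂.map (fun ω i => (𝒴 ω).1 ((𝒴 ω).2 i))) (descArr n ⁻¹' A) :=
          (Measure.map_apply hYm hpre).symm
      _ = (P.map (fun ω i => X' ω (σ' ω i))) (descArr n ⁻¹' A) := by rw [hmap2]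
      _ = P ((fun ω i => X' ω (σ' ω i)) ⁻¹' (descArr n ⁻¹' A)) :=
          Measure.map_apply (RA.measurable_permApp hX'm hσ'm) hpre
      _ = P (X' ⁻¹' (descArr n ⁻¹' A)) := by
          congr 1
          ext ω
          simp only [Set.mem_preimage]
          rw [show (fun i => X' ω (σ' ω i)) = X' ω ∘ ⇑(σ' ω) from rfl, RA.descArr_comp_perm]
      _ = (P.map X') (descArr n ⁻¹' A) := (Measure.map_apply hX'm hpre).symm
      _ = (P₁.map (fun ω => descArr n (X ω))) (descArr n ⁻¹' A) := by rw [hmap1]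
      _ = (n.factorial : ENNReal) * volume ((descArr n ⁻¹' A) ∩ simplexSet n) :=
          RA.map_descArr P₁ hX _ hpre
      _ = (n.factorial : ENNReal) * volume A := by
          congr 2
          ext a
          simp only [Set.mem_inter_iff, Set.mem_preimage]
          constructor
          · rintro ⟨h1, h2⟩
            rwa [RA.descArr_of_mem_simplex h2] at h1
          · intro ha
            exact ⟨by rw [RA.descArr_of_mem_simplex (hAΔ ha)]; exact ha, hAΔ ha⟩
  · intro h
    refine ⟨Ω₂, inferInstance, P₂, inferInstance,
      (fun ω => (𝒴 ω).1), (fun ω => (𝒴 ω).2), h𝒴₁, h𝒴₂, ?_, rfl⟩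
    apply Measure.ext
    intro E hE
    rw [Measure.map_apply h𝒴₁ hE, RA.map_descArr P₁ hX E hE]
    have hae : ((fun ω => (𝒴 ω).1) ⁻¹' E) =ᵐ[P₂]
        ((fun ω => (𝒴 ω).1) ⁻¹' (E ∩ simplexSet n)) := by
      filter_upwards [hval] with ω hω
      show ((𝒴 ω).1 ∈ E) = ((𝒴 ω).1 ∈ E ∩ simplexSet n)
      simp only [Set.mem_inter_iff, eq_iff_iff]
      exact ⟨fun hE' => ⟨hE', hω⟩, fun h' => h'.1⟩
    rw [measure_congr hae]
    exact h (E ∩ simplexSet n) Set.inter_subset_right (hE.inter RA.measurableSet_simplexSet)
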